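/- Let B ⊆ ℝ^q be a polyhedron and let F be a nonempty face of B. Then Φ(F) is a face of Φ(B). -/

import Mathlib

open Matrix Set Pointwise

noncomputable section

/-- `cone B = {l • x : l ≥ 0, x ∈ conv B}` -/
def coneOf {E : Type*} [AddCommGroup E] [Module ℝ E] (B : Set E) : Set E :=
  {y | ∃ l : ℝ, 0 ≤ l ∧ ∃ x ∈ convexHull ℝ B, y = l • x}

/-- `F` is a face of the convex set `B`. -/
def IsFaceOf {E : Type*} [AddCommGroup E] [Module ℝ E] (F B : Set E) : Prop :=
  Convex ℝ F ∧ F ⊆ B ∧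
    ∀ y ∈ B, ∀ z ∈ B, ∀ l : ℝ, 0 < l → l < 1 → l • y + (1 - l) • z ∈ F → y ∈ F ∧ z ∈ F

/-- recession cone `0⁺B` of a convex set. -/
def recCone {E : Type*} [AddCommGroup E] [Module ℝ E] (B : Set E) : Set E :=
  {d | ∀ x ∈ B, ∀ t : ℝ, 0 ≤ t → x + t • d ∈ B}

/-- lineality space `L(B) = 0⁺B ∩ (−0⁺B)`. -/
def linealOf {E : Type*} [AddCommGroup E] [Module ℝ E] (B : Set E) : Set E :=
  recCone B ∩ -recCone B

/-- dimension of (the affine hull of) a set. -/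
def sdim {E : Type*} [AddCommGroup E] [Module ℝ E] (B : Set E) : ℕ :=
  Module.finrank ℝ (vectorSpan ℝ B)

def IsPolyhedron {d : ℕ} (B : Set (Fin d → ℝ)) : Prop :=
  ∃ (k : ℕ) (W : Matrix (Fin k) (Fin d) ℝ) (v : Fin k → ℝ), B = {x | v ≤ W.mulVec x}

/-- orthogonal complement (as a set) of a set of vectors. -/
def orthSet {d : ℕ} (L : Set (Fin d → ℝ)) : Set (Fin d → ℝ) :=
  {y | ∀ z ∈ L, y ⬝ᵥ z = 0}

/-- polar cone `K° = {w : ∀ y ∈ K, wᵀy ≤ 0}`. -/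
def polarCone {d : ℕ} (K : Set (Fin d → ℝ)) : Set (Fin d → ℝ) :=
  {w | ∀ y ∈ K, w ⬝ᵥ y ≤ 0}

/-- the last index of `Fin q` (1-based index `q`). -/
def lastIdx (q : ℕ) (hq : 0 < q) : Fin q := ⟨q - 1, by omega⟩

/-- `y ↦ (y,1)`. -/
def lift1 {q : ℕ} (y : Fin q → ℝ) : Fin (q + 1) → ℝ := Fin.snoc y 1

/-- `y ↦ (y,0)`. -/
def lift0 {q : ℕ} (y : Fin q → ℝ) : Fin (q + 1) → ℝ := Fin.snoc y 0

/-- `p(y) = (y₁,…,y_q)`. -/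
def projq {q : ℕ} (y : Fin (q + 1) → ℝ) : Fin q → ℝ := fun i => y i.castSucc

/-- `Φ(B) = cl cone (B × {1})`. -/
def PhiMap {q : ℕ} (B : Set (Fin q → ℝ)) : Set (Fin (q + 1) → ℝ) :=
  closure (coneOf (lift1 '' B))

/-- the block matrix `G = (A; −ZᵀP; 0)`. -/
def Gmat {m n q r : ℕ} (A : Matrix (Fin m) (Fin n) ℝ) (P : Matrix (Fin q) (Fin n) ℝ)
    (Z : Matrix (Fin q) (Fin r) ℝ) : Matrix (Fin (m + r + 1)) (Fin n) ℝ :=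
  fun i j =>
    if h : (i : ℕ) < m then A ⟨i, h⟩ j
    else if h2 : (i : ℕ) < m + r then -(∑ l : Fin q, Z l ⟨(i : ℕ) - m, by omega⟩ * P l j)
    else 0

/-- the block matrix `H` with rows `(0, −b)`, `(Zᵀ, 0)` and `(0,…,0,1)`. -/
def Hmat {m q r : ℕ} (b : Fin m → ℝ) (Z : Matrix (Fin q) (Fin r) ℝ) :
    Matrix (Fin (m + r + 1)) (Fin (q + 1)) ℝ :=
  fun i j =>
    if h : (i : ℕ) < m then (if (j : ℕ) = q then -b ⟨i, h⟩ else 0)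
    else if h2 : (i : ℕ) < m + r then
      (if hj : (j : ℕ) < q then Z ⟨j, hj⟩ ⟨(i : ℕ) - m, by omega⟩ else 0)
    else (if (j : ℕ) = q then 1 else 0)

/-- dual objective `D(u,w) = (w₁,…,w_{q−1}, bᵀu)`. -/
def Dmap {m q : ℕ} (b : Fin m → ℝ) (uw : (Fin m → ℝ) × (Fin q → ℝ)) : Fin q → ℝ :=
  fun i => if (i : ℕ) < q - 1 then uw.2 i else b ⬝ᵥ uw.1

/-- `R* = {v : v₁ = ⋯ = v_{q−1} = 0, v_q ≥ 0}`. -/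
def RstarSet (q : ℕ) (hq : 0 < q) : Set (Fin q → ℝ) :=
  {v | (∀ i : Fin q, (i : ℕ) < q - 1 → v i = 0) ∧ 0 ≤ v (lastIdx q hq)}

/-- dual feasible set `T`. -/
def Tset {m n q r : ℕ} (A : Matrix (Fin m) (Fin n) ℝ) (P : Matrix (Fin q) (Fin n) ℝ)
    (Z : Matrix (Fin q) (Fin r) ℝ) (cbar : Fin q → ℝ) :
    Set ((Fin m → ℝ) × (Fin q → ℝ)) :=
  {uw | ∃ v : Fin r → ℝ, 0 ≤ v ∧ uw.2 = Z.mulVec v ∧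
    Aᵀ.mulVec uw.1 = Pᵀ.mulVec uw.2 ∧ cbar ⬝ᵥ uw.2 = 1 ∧ 0 ≤ uw.1}

/-- `φ(y,w) = Σ_{i<q} y_i w_i + y_q (1 − Σ_{i<q} c̄_i w_i) − w_q`. -/
def phiFn {q : ℕ} (hq : 0 < q) (cbar : Fin q → ℝ) (y w : Fin q → ℝ) : ℝ :=
  (∑ i : Fin q, if (i : ℕ) < q - 1 then y i * w i else 0)
    + y (lastIdx q hq) * (1 - ∑ i : Fin q, if (i : ℕ) < q - 1 then cbar i * w i else 0)
    - w (lastIdx q hq)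

/-- duality map `Ψ(F*) = ⋂_{w ∈ F*} {y ∈ Pset : φ(y,w) = 0}`. -/
def PsiMap {q : ℕ} (hq : 0 < q) (cbar : Fin q → ℝ) (Pset : Set (Fin q → ℝ))
    (Fstar : Set (Fin q → ℝ)) : Set (Fin q → ℝ) :=
  ⋂ w ∈ Fstar, {y ∈ Pset | phiFn hq cbar y w = 0}

/-- `My = (−y₁,…,−y_{q−1}, c̄₁y₁+⋯+c̄_{q−1}y_{q−1} − y_{q+1}, y_q)`. -/
def Mmap {q : ℕ} (hq : 0 < q) (cbar : Fin q → ℝ) (y : Fin (q + 1) → ℝ) : Fin (q + 1) → ℝ :=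
  fun i =>
    if (i : ℕ) < q - 1 then -y i
    else if (i : ℕ) = q - 1 then
      (∑ j : Fin q, if (j : ℕ) < q - 1 then cbar j * y j.castSucc else 0) - y (Fin.last q)
    else y ((lastIdx q hq).castSucc)

/-- `M⁻¹w = (−w₁,…,−w_{q−1}, w_{q+1}, −cᵀw)` where `c = (c̄,0)`. -/
def MinvMap {q : ℕ} (cbar : Fin q → ℝ) (w : Fin (q + 1) → ℝ) : Fin (q + 1) → ℝ :=
  fun i =>
    if (i : ℕ) < q - 1 then -w i
    else if (i : ℕ) = q - 1 then w (Fin.last q)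
    else -((Fin.snoc cbar 0 : Fin (q + 1) → ℝ) ⬝ᵥ w)

/-- `p*(w) = (w₁,…,w_{q−1},w_{q+1})`. -/
def pstarMap {q : ℕ} (w : Fin (q + 1) → ℝ) : Fin q → ℝ :=
  fun i => if (i : ℕ) < q - 1 then w i.castSucc else w (Fin.last q)

/-- `y` generates an extreme ray of the pointed convex cone `Q`. -/
def IsExtremeDir {E : Type*} [AddCommGroup E] [Module ℝ E] (Q : Set E) (y : E) : Prop :=
  y ∈ Q ∧ y ≠ 0 ∧ IsFaceOf (coneOf {y}) Q

/-- `σ(u,w) = (u¹, −p(w))` where `u = (u¹,u²,u³) ∈ ℝ^m×ℝ^r×ℝ`. -/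
def sigmaMap {m q r : ℕ} (uw : (Fin (m + r + 1) → ℝ) × (Fin (q + 1) → ℝ)) :
    (Fin m → ℝ) × (Fin q → ℝ) :=
  (fun i => uw.1 (Fin.castLE (by omega) i), -projq uw.2)


section Aux

open Filter Topology

variable {q : ℕ}

lemma lift1_last (x : Fin q → ℝ) : lift1 x (Fin.last q) = 1 := by simp [lift1]

lemma lift1_castSucc (x : Fin q → ℝ) (i : Fin q) : lift1 x i.castSucc = x i := by simp [lift1]

lemma lift0_last (x : Fin q → ℝ) : lift0 x (Fin.last q) = 0 := by simp [lift0]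

lemma lift0_castSucc (x : Fin q → ℝ) (i : Fin q) : lift0 x i.castSucc = x i := by simp [lift0]

lemma funext_fin_succ {f g : Fin (q + 1) → ℝ} (hlast : f (Fin.last q) = g (Fin.last q))
    (h : ∀ i : Fin q, f i.castSucc = g i.castSucc) : f = g := by
  funext i
  exact Fin.lastCases hlast h i

lemma convex_coneOf {E : Type*} [AddCommGroup E] [Module ℝ E] (S : Set E) :
    Convex ℝ (coneOf S) := by
  rintro w1 ⟨l1, hl1, x1, hx1, rfl⟩ w2 ⟨l2, hl2, x2, hx2, rfl⟩ a b ha hb hab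
  have hs : (0:ℝ) ≤ a * l1 + b * l2 := by positivity
  rcases hs.lt_or_eq with h | h
  · refine ⟨a * l1 + b * l2, hs, (a * l1 / (a * l1 + b * l2)) • x1
      + (b * l2 / (a * l1 + b * l2)) • x2, ?_, ?_⟩
    · exact (convex_convexHull ℝ S) hx1 hx2 (by positivity) (by positivity)
        (by field_simp)
    · rw [smul_add, smul_smul, smul_smul, smul_smul, smul_smul,
        mul_div_cancel₀ _ (ne_of_gt h), mul_div_cancel₀ _ (ne_of_gt h)]
  · have h1 : a * l1 = 0 := by nlinarith [mul_nonneg ha hl1, mul_nonneg hb hl2]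
    have h2 : b * l2 = 0 := by nlinarith [mul_nonneg ha hl1, mul_nonneg hb hl2]
    refine ⟨0, le_refl _, x1, hx1, ?_⟩
    rw [smul_smul, smul_smul, h1, h2]
    simp

lemma coneOf_mono {E : Type*} [AddCommGroup E] [Module ℝ E] {S T : Set E} (h : S ⊆ T) :
    coneOf S ⊆ coneOf T := by
  rintro w ⟨l, hl, x, hx, rfl⟩
  exact ⟨l, hl, x, convexHull_mono h hx, rfl⟩

lemma convex_lift1_image {C : Set (Fin q → ℝ)} (hC : Convex ℝ C) :
    Convex ℝ (lift1 '' C) := by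
  rintro w1 ⟨x, hx, rfl⟩ w2 ⟨y, hy, rfl⟩ a b ha hb hab
  refine ⟨a • x + b • y, hC hx hy ha hb hab, ?_⟩
  refine funext_fin_succ ?_ ?_
  · simp [lift1_last, hab]
  · intro i; simp [lift1_castSucc]

lemma mem_coneOf_lift1 {C : Set (Fin q → ℝ)} (hC : Convex ℝ C) {w : Fin (q + 1) → ℝ} :
    w ∈ coneOf (lift1 '' C) ↔ ∃ l : ℝ, 0 ≤ l ∧ ∃ x ∈ C, w = l • lift1 x := by
  have himg : convexHull ℝ (lift1 '' C) = lift1 '' C :=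
    (convex_lift1_image hC).convexHull_eq
  constructor
  · rintro ⟨l, hl, x, hx, rfl⟩
    rw [himg] at hx
    obtain ⟨y, hy, rfl⟩ := hx
    exact ⟨l, hl, y, hy, rfl⟩
  · rintro ⟨l, hl, x, hx, rfl⟩
    exact ⟨l, hl, lift1 x, by rw [himg]; exact Set.mem_image_of_mem _ hx, rfl⟩

/-- the two-branch description of `Φ(C)` for a closed convex nonempty `C`. -/
def coneSet (C : Set (Fin q → ℝ)) : Set (Fin (q + 1) → ℝ) :=
  {w | (∃ τ : ℝ, 0 < τ ∧ ∃ x ∈ C, w = τ • lift1 x) ∨ ∃ d ∈ recCone C, w = lift0 d}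

lemma phiMap_eq {C : Set (Fin q → ℝ)} (hC : Convex ℝ C) (hcl : IsClosed C)
    (hne : C.Nonempty) : PhiMap C = coneSet C := by
  apply Set.Subset.antisymm
  · intro w hw
    rw [PhiMap, mem_closure_iff_seq_limit] at hw
    obtain ⟨u, hu, hlim⟩ := hw
    choose l hl0 x hx hux using fun n => (mem_coneOf_lift1 hC).1 (hu n)
    have hcoord : ∀ i : Fin (q + 1), Tendsto (fun n => u n i) atTop (𝓝 (w i)) :=
      fun i => ((continuous_apply i).tendsto w).comp hlim
    have hul : ∀ n, u n (Fin.last q) = l n := by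
      intro n; rw [hux n]; simp [lift1_last]
    have hll : Tendsto l atTop (𝓝 (w (Fin.last q))) := by
      have := hcoord (Fin.last q); simpa [hul] using this
    have hτ0 : 0 ≤ w (Fin.last q) := ge_of_tendsto hll (Eventually.of_forall hl0)
    have hcs : ∀ (i : Fin q) n, u n i.castSucc = l n * x n i := by
      intro i n; rw [hux n]; simp [lift1_castSucc]
    rcases hτ0.lt_or_eq with hτ | hτ
    · -- positive last coordinate
      left
      set τ := w (Fin.last q) with hτdef
      have hev : ∀ᶠ n in atTop, 0 < l n := hll.eventually (eventually_gt_nhds hτ)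
      have hxt : Tendsto (fun n => x n) atTop (𝓝 (τ⁻¹ • projq w)) := by
        rw [tendsto_pi_nhds]
        intro i
        have h1 : Tendsto (fun n => (l n)⁻¹ * (l n * x n i)) atTop
            (𝓝 (τ⁻¹ * w i.castSucc)) :=
          (hll.inv₀ (ne_of_gt hτ)).mul (by simpa [hcs i] using hcoord i.castSucc)
        have h2 : Tendsto (fun n => x n i) atTop (𝓝 (τ⁻¹ * w i.castSucc)) := by
          refine h1.congr' (hev.mono fun n hn => ?_)
          field_simp
        simpa [projq] using h2
      have hmem : τ⁻¹ • projq w ∈ C :=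
        hcl.mem_of_tendsto hxt (Eventually.of_forall hx)
      refine ⟨τ, hτ, τ⁻¹ • projq w, hmem, ?_⟩
      refine funext_fin_succ ?_ ?_
      · simp [lift1_last, hτdef]
      · intro i
        simp only [Pi.smul_apply, lift1_castSucc, smul_eq_mul, projq]
        field_simp
    · -- last coordinate zero : recession direction
      right
      refine ⟨projq w, ?_, ?_⟩
      · intro x0 hx0 t ht
        have hlx : ∀ i : Fin q, Tendsto (fun n => l n * x n i) atTop (𝓝 (projq w i)) := by
          intro i
          simpa [hcs i, projq] using hcoord i.castSucc
        have hl0' : Tendsto l atTop (𝓝 0) := by rwa [← hτ] at hll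
        have hvt : Tendsto (fun n => (1 - t * l n) • x0 + (t * l n) • x n) atTop
            (𝓝 (x0 + t • projq w)) := by
          rw [tendsto_pi_nhds]
          intro i
          have htl : Tendsto (fun n => t * l n) atTop (𝓝 0) := by
            simpa using hl0'.const_mul t
          have : Tendsto (fun n => (1 - t * l n) * x0 i + t * (l n * x n i)) atTop
              (𝓝 ((1 - 0) * x0 i + t * projq w i)) :=
            (((tendsto_const_nhds.sub htl).mul tendsto_const_nhds)).add
              ((hlx i).const_mul t)
          simpa [mul_assoc, mul_comm, mul_left_comm] using this
        have hev : ∀ᶠ n in atTop, (1 - t * l n) • x0 + (t * l n) • x n ∈ C := by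
          have htl : Tendsto (fun n => t * l n) atTop (𝓝 0) := by
            simpa using hl0'.const_mul t
          have h1 : ∀ᶠ n in atTop, t * l n < 1 :=
            htl.eventually (eventually_lt_nhds one_pos)
          refine h1.mono fun n hn => ?_
          exact hC hx0 (hx n) (by linarith) (mul_nonneg ht (hl0 n)) (by ring)
        have := mem_closure_of_tendsto hvt hev
        rwa [hcl.closure_eq] at this
      · refine funext_fin_succ ?_ ?_
        · simp [lift0_last, ← hτ]
        · intro i; simp [lift0_castSucc, projq]
  · rintro w (⟨τ, hτ, x, hx, rfl⟩ | ⟨d, hd, rfl⟩)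
    · exact subset_closure ((mem_coneOf_lift1 hC).2 ⟨τ, hτ.le, x, hx, rfl⟩)
    · obtain ⟨x0, hx0⟩ := hne
      have hmemseq : ∀ n : ℕ, lift0 d + (1 / ((n : ℝ) + 1)) • lift1 x0
          ∈ coneOf (lift1 '' C) := by
        intro n
        refine (mem_coneOf_lift1 hC).2 ⟨1 / ((n : ℝ) + 1), by positivity,
          x0 + ((n : ℝ) + 1) • d, hd x0 hx0 _ (by positivity), ?_⟩
        refine funext_fin_succ ?_ ?_
        · simp [lift0_last, lift1_last]
        · intro i
          have hne' : (n : ℝ) + 1 ≠ 0 := by positivity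
          simp only [Pi.add_apply, Pi.smul_apply, lift0_castSucc, lift1_castSucc,
            smul_eq_mul]
          field_simp
          ring
      have hts : Tendsto (fun n : ℕ => lift0 d + (1 / ((n : ℝ) + 1)) • lift1 x0) atTop
          (𝓝 (lift0 d)) := by
        have : Tendsto (fun n : ℕ => (1 / ((n : ℝ) + 1)) • lift1 x0) atTop
            (𝓝 ((0 : ℝ) • lift1 x0)) :=
          tendsto_one_div_add_atTop_nhds_zero_nat.smul_const (lift1 x0)
        simpa using tendsto_const_nhds.add this
      exact mem_closure_of_tendsto hts (Eventually.of_forall hmemseq)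

lemma mulVec_combo {k q : ℕ} (W : Matrix (Fin k) (Fin q) ℝ) (a b : ℝ) (x y : Fin q → ℝ) :
    W.mulVec (a • x + b • y) = a • W.mulVec x + b • W.mulVec y := by
  rw [Matrix.mulVec_add, Matrix.mulVec_smul, Matrix.mulVec_smul]

lemma polyhedron_convex {q : ℕ} {B : Set (Fin q → ℝ)} (hB : IsPolyhedron B) :
    Convex ℝ B := by
  obtain ⟨k, W, v, rfl⟩ := hB
  intro x hx y hy a b ha hb hab
  intro i
  have := mulVec_combo W a b x y
  simp only [Set.mem_setOf_eq] at hx hy ⊢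
  rw [this]
  have h1 := hx i
  have h2 := hy i
  simp only [Pi.add_apply, Pi.smul_apply, smul_eq_mul]
  have hv : v i = a * v i + b * v i := by rw [← add_mul, hab, one_mul]
  nlinarith [mul_le_mul_of_nonneg_left h1 ha, mul_le_mul_of_nonneg_left h2 hb]

lemma polyhedron_closed {q : ℕ} {B : Set (Fin q → ℝ)} (hB : IsPolyhedron B) :
    IsClosed B := by
  obtain ⟨k, W, v, rfl⟩ := hB
  have : {x : Fin q → ℝ | v ≤ W.mulVec x} = ⋂ i, {x | v i ≤ W.mulVec x i} := by
    ext x; simp [Pi.le_def]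
  rw [this]
  refine isClosed_iInter fun i => isClosed_le continuous_const ?_
  have : Continuous fun x : Fin q → ℝ => ∑ j, W i j * x j := by
    exact continuous_finset_sum _ fun j _ => continuous_const.mul (continuous_apply j)
  simpa [Matrix.mulVec, dotProduct] using this

lemma face_closed {q : ℕ} {B F : Set (Fin q → ℝ)} (hB : IsPolyhedron B)
    (hF : IsFaceOf F B) (hne : F.Nonempty) : IsClosed F := by
  obtain ⟨k, W, v, rfl⟩ := hB
  set I : Set (Fin k) := {i | ∀ x ∈ F, W.mulVec x i = v i} with hI
  have hFB := hF.2.1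
  -- a point of F where all non-I constraints are strict
  have key : ∀ J : Finset (Fin k), ∃ x ∈ F, ∀ i ∈ J, i ∉ I → v i < W.mulVec x i := by
    intro J
    induction J using Finset.induction_on with
    | empty => obtain ⟨x, hx⟩ := hne; exact ⟨x, hx, by simp⟩
    | @insert a s hnm ih =>
      obtain ⟨x1, hx1F, hx1⟩ := ih
      by_cases ha : a ∈ I
      · refine ⟨x1, hx1F, fun i hi hiI => ?_⟩
        rcases Finset.mem_insert.1 hi with rfl | hi
        · exact absurd ha hiI
        · exact hx1 i hi hiI
      · have : ∃ x ∈ F, W.mulVec x a ≠ v a := by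
          by_contra h
          push_neg at h
          exact ha h
        obtain ⟨x2, hx2F, hx2⟩ := this
        have hx2' : v a < W.mulVec x2 a := lt_of_le_of_ne (hFB hx2F a) (Ne.symm hx2)
        refine ⟨(1/2 : ℝ) • x1 + (1/2 : ℝ) • x2,
          hF.1 hx1F hx2F (by norm_num) (by norm_num) (by norm_num), ?_⟩
        intro i hi hiI
        have hm : W.mulVec ((1/2 : ℝ) • x1 + (1/2 : ℝ) • x2) i
            = (1/2) * W.mulVec x1 i + (1/2) * W.mulVec x2 i := by
          rw [mulVec_combo]; simp
        rw [hm]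
        rcases Finset.mem_insert.1 hi with rfl | hi'
        · have h1 := hFB hx1F i
          linarith
        · have h1 := hx1 i hi' hiI
          have h2 := hFB hx2F i
          linarith
  obtain ⟨xb, hxbF, hxb⟩ := key (Finset.univ)
  have hxb' : ∀ i, i ∉ I → v i < W.mulVec xb i := fun i => hxb i (Finset.mem_univ i)
  have hGF : {x | v ≤ W.mulVec x} ∩ {x | ∀ i ∈ I, W.mulVec x i = v i} = F := by
    apply Set.Subset.antisymm
    · rintro y ⟨hyB, hyI⟩
      -- choose a small ε
      have hev : ∀ᶠ ε in 𝓝[>] (0:ℝ), ∀ i : Fin k,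
          i ∉ I → ε * (W.mulVec y i - W.mulVec xb i) ≤ W.mulVec xb i - v i := by
        rw [eventually_all]
        intro i
        by_cases hi : i ∈ I
        · exact Eventually.of_forall fun ε h => absurd hi h
        · have ht : Tendsto (fun ε : ℝ => ε * (W.mulVec y i - W.mulVec xb i)) (𝓝[>] 0)
              (𝓝 0) := by
            have : Tendsto (fun ε : ℝ => ε * (W.mulVec y i - W.mulVec xb i)) (𝓝 0)
                (𝓝 0) := by
              simpa using Continuous.tendsto (f := fun ε : ℝ => ε * (W.mulVec y i - W.mulVec xb i))
                  (continuous_id.mul continuous_const) (0:ℝ)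
            exact this.mono_left nhdsWithin_le_nhds
          have := ht.eventually (eventually_lt_nhds (sub_pos.2 (hxb' i hi)))
          exact this.mono fun ε hε _ => hε.le
      obtain ⟨ε, hεc, hεpos⟩ := (hev.and self_mem_nhdsWithin).exists
      set z := (1 + ε) • xb - ε • y with hz
      have hzB : z ∈ {x | v ≤ W.mulVec x} := by
        intro i
        have hmz : W.mulVec z i = (1 + ε) * W.mulVec xb i - ε * W.mulVec y i := by
          have : z = (1 + ε) • xb + (-ε) • y := by rw [hz]; module
          rw [this, mulVec_combo]; simp; ring
        rw [hmz]
        by_cases hi : i ∈ I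
        · have h1 : W.mulVec xb i = v i := hi xb hxbF
          have h2 : W.mulVec y i = v i := hyI i hi
          rw [h1, h2]; ring_nf; exact le_refl _
        · have h1 := hεc i hi
          have h2 := hFB hxbF i
          nlinarith
      have hcomb : (ε / (1 + ε)) • y + (1 - ε / (1 + ε)) • z = xb := by
        rw [hz]
        have h1 : (1:ℝ) + ε ≠ 0 := by positivity
        match_scalars <;> field_simp <;> ring
      have hface := hF.2.2 y hyB z hzB (ε / (1 + ε))
        (by positivity) (by rw [div_lt_one (by positivity)]; linarith)
        (by rw [hcomb]; exact hxbF)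
      exact hface.1
    · intro x hxF
      exact ⟨hFB hxF, fun i hi => hi x hxF⟩
  rw [← hGF]
  refine IsClosed.inter (polyhedron_closed ⟨k, W, v, rfl⟩) ?_
  have : {x : Fin q → ℝ | ∀ i ∈ I, W.mulVec x i = v i}
      = ⋂ i ∈ I, {x | W.mulVec x i = v i} := by ext x; simp
  rw [this]
  refine isClosed_biInter fun i _ => isClosed_eq ?_ continuous_const
  have : Continuous fun x : Fin q → ℝ => ∑ j, W i j * x j :=
    continuous_finset_sum _ fun j _ => continuous_const.mul (continuous_apply j)
  simpa [Matrix.mulVec, dotProduct] using this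

lemma recCone_face {E : Type*} [AddCommGroup E] [Module ℝ E] {F B : Set E}
    (hF : IsFaceOf F B) {y z : E} (hy : y ∈ recCone B) (hz : z ∈ recCone B) {l : ℝ}
    (hl0 : 0 < l) (hl1 : l < 1) (hd : l • y + (1 - l) • z ∈ recCone F) :
    y ∈ recCone F ∧ z ∈ recCone F := by
  have main : ∀ x ∈ F, ∀ t : ℝ, 0 ≤ t → x + t • y ∈ F ∧ x + t • z ∈ F := by
    intro x hx t ht
    have h1 : x + t • y ∈ B := hy x (hF.2.1 hx) t ht
    have h2 : x + t • z ∈ B := hz x (hF.2.1 hx) t ht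
    have hcomb : l • (x + t • y) + (1 - l) • (x + t • z)
        = x + t • (l • y + (1 - l) • z) := by module
    exact hF.2.2 _ h1 _ h2 l hl0 hl1 (by rw [hcomb]; exact hd x hx t ht)
  exact ⟨fun x hx t ht => (main x hx t ht).1, fun x hx t ht => (main x hx t ht).2⟩

lemma recCone_of_ray {q : ℕ} {B F : Set (Fin q → ℝ)} (hF : IsFaceOf F B)
    (hFcl : IsClosed F) {x0 z : Fin q → ℝ} (hx0 : x0 ∈ F) (hz : z ∈ recCone B)
    {c : ℝ} (hc : 0 < c) (hxc : x0 + c • z ∈ F) : z ∈ recCone F := by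
  have hx0B := hF.2.1 hx0
  -- step 1 : all multiples (n+1)*c
  have step1 : ∀ n : ℕ, x0 + (((n : ℝ) + 1) * c) • z ∈ F := by
    intro n
    induction n with
    | zero => simpa using hxc
    | succ n ih =>
      have hwB : x0 + (((n : ℝ) + 2) * c) • z ∈ B :=
        hz x0 hx0B _ (by positivity)
      have hcomb : (1 / ((n : ℝ) + 2)) • x0 + (1 - 1 / ((n : ℝ) + 2))
          • (x0 + (((n : ℝ) + 2) * c) • z) = x0 + (((n : ℝ) + 1) * c) • z := by
        have h2 : ((n : ℝ) + 2) ≠ 0 := by positivity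
        match_scalars <;> field_simp <;> ring
      have hface := hF.2.2 x0 hx0B _ hwB (1 / ((n : ℝ) + 2))
        (by positivity)
        (by rw [div_lt_one (by positivity)]
            have := Nat.cast_nonneg (α := ℝ) n
            linarith)
        (by rw [hcomb]; exact ih)
      have := hface.2
      convert this using 3
      push_cast
      ring
  -- step 2 : all nonnegative multiples from x0
  have step2 : ∀ t : ℝ, 0 ≤ t → x0 + t • z ∈ F := by
    intro t ht
    obtain ⟨n, hn⟩ := exists_nat_ge (t / c)
    have htn : t ≤ ((n : ℝ) + 1) * c := by
      rw [div_le_iff₀ hc] at hn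
      nlinarith
    have hpos : (0:ℝ) < ((n : ℝ) + 1) * c := by positivity
    have hcomb : (1 - t / (((n : ℝ) + 1) * c)) • x0 + (t / (((n : ℝ) + 1) * c))
        • (x0 + (((n : ℝ) + 1) * c) • z) = x0 + t • z := by
      match_scalars <;> field_simp <;> ring
    rw [← hcomb]
    exact hF.1 hx0 (step1 n) (by rw [sub_nonneg, div_le_one hpos]; exact htn)
      (by positivity) (by ring)
  -- step 3 : from any point of F
  intro x hx t ht
  have hseq : Tendsto (fun n : ℕ => x + t • z + (1 / ((n : ℝ) + 1)) • (x0 - x)) atTop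
      (𝓝 (x + t • z)) := by
    have : Tendsto (fun n : ℕ => (1 / ((n : ℝ) + 1)) • (x0 - x)) atTop
        (𝓝 ((0:ℝ) • (x0 - x))) :=
      tendsto_one_div_add_atTop_nhds_zero_nat.smul_const _
    simpa using tendsto_const_nhds.add this
  have hmem : ∀ n : ℕ, x + t • z + (1 / ((n : ℝ) + 1)) • (x0 - x) ∈ F := by
    intro n
    have h1 : x0 + (((n : ℝ) + 1) * t) • z ∈ F := step2 _ (by positivity)
    have hcomb : (1 - 1 / ((n : ℝ) + 1)) • x + (1 / ((n : ℝ) + 1))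
        • (x0 + (((n : ℝ) + 1) * t) • z) = x + t • z + (1 / ((n : ℝ) + 1)) • (x0 - x) := by
      have h2 : ((n : ℝ) + 1) ≠ 0 := by positivity
      match_scalars <;> field_simp <;> ring
    rw [← hcomb]
    refine hF.1 hx h1 ?_ (by positivity) (by ring)
    rw [sub_nonneg, div_le_one (by positivity)]
    simp
  have := mem_closure_of_tendsto hseq (Eventually.of_forall hmem)
  rwa [hFcl.closure_eq] at this

end Aux

/-- If `F` is a nonempty face of the polyhedron `B`, then `Φ(F)` is a face
of `Φ(B)`. -/
theorem stmt6 (q : ℕ) (B : Set (Fin q → ℝ)) (hB : IsPolyhedron B)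
    (F : Set (Fin q → ℝ)) (hF : IsFaceOf F B) (hFne : F.Nonempty) :
    IsFaceOf (PhiMap F) (PhiMap B) := by
  have hBconv := polyhedron_convex hB
  have hBcl := polyhedron_closed hB
  have hBne : B.Nonempty := hFne.mono hF.2.1
  have hFcl := face_closed hB hF hFne
  have hPB := phiMap_eq hBconv hBcl hBne
  have hPF := phiMap_eq hF.1 hFcl hFne
  refine ⟨(convex_coneOf _).closure,
    closure_mono (coneOf_mono (Set.image_mono hF.2.1)), ?_⟩
  intro Y hY Z hZ l hl0 hl1 hP
  rw [hPB] at hY hZ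
  rw [hPF] at hP ⊢
  rcases hY with ⟨s, hs, y, hyB, rfl⟩ | ⟨dY, hdY, rfl⟩ <;>
    rcases hZ with ⟨t, ht, z, hzB, rfl⟩ | ⟨dZ, hdZ, rfl⟩
  · -- both positive
    set a := l * s with ha
    set b := (1 - l) * t with hb
    have ha0 : 0 < a := by positivity
    have hb0 : 0 < b := by nlinarith
    have hab0 : 0 < a + b := by linarith
    set wpt := (a / (a + b)) • y + (b / (a + b)) • z with hwpt
    have hPeq : l • (s • lift1 y) + (1 - l) • (t • lift1 z) = (a + b) • lift1 wpt := by
      refine funext_fin_succ ?_ ?_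
      · simp only [Pi.add_apply, Pi.smul_apply, lift1_last, smul_eq_mul]
        ring
      · intro i
        simp only [Pi.add_apply, Pi.smul_apply, lift1_castSucc, hwpt, smul_eq_mul]
        field_simp
        ring
    rcases hP with ⟨τ, hτ, x, hxF, heq⟩ | ⟨d, _, heq⟩
    · rw [hPeq] at heq
      have h1 : a + b = τ := by
        have := congrFun heq (Fin.last q)
        simpa [lift1_last] using this
      have h2 : wpt = x := by
        funext i
        have := congrFun heq i.castSucc
        simp only [Pi.smul_apply, lift1_castSucc, smul_eq_mul, ← h1] at this
        exact mul_left_cancel₀ (ne_of_gt hab0) this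
      have hwF : (a / (a + b)) • y + (1 - a / (a + b)) • z ∈ F := by
        have hb' : 1 - a / (a + b) = b / (a + b) := by field_simp; ring
        rw [hb']
        rw [← hwpt] at *
        exact h2 ▸ hxF
      have hface := hF.2.2 y hyB z hzB (a / (a + b))
        (by positivity) (by rw [div_lt_one hab0]; linarith) hwF
      exact ⟨Or.inl ⟨s, hs, y, hface.1, rfl⟩, Or.inl ⟨t, ht, z, hface.2, rfl⟩⟩
    · exfalso
      have := congrFun heq (Fin.last q)
      simp only [Pi.add_apply, Pi.smul_apply, lift1_last, lift0_last, smul_eq_mul] at this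
      nlinarith
  · -- Y positive, Z recession
    rcases hP with ⟨τ, hτ, x, hxF, heq⟩ | ⟨d, _, heq⟩
    · have h1 : l * s = τ := by
        have := congrFun heq (Fin.last q)
        simpa [lift1_last, lift0_last] using this
      set c := (1 - l) / (l * s) with hc
      have hc0 : 0 < c := by
        apply div_pos (by linarith) (by positivity)
      have hxe : y + c • dZ = x := by
        funext i
        have := congrFun heq i.castSucc
        simp only [Pi.add_apply, Pi.smul_apply, lift1_castSucc, lift0_castSucc,
          smul_eq_mul, ← h1] at this
        have hls : l * s ≠ 0 := by positivity
        simp only [Pi.add_apply, Pi.smul_apply, smul_eq_mul, hc]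
        field_simp
        linarith [this]
      have hyc : y + c • dZ ∈ F := hxe ▸ hxF
      have hy2B : y + (2 * c) • dZ ∈ B := hdZ y hyB (2 * c) (by positivity)
      have hmid : (1/2 : ℝ) • y + (1 - 1/2 : ℝ) • (y + (2 * c) • dZ) = y + c • dZ := by
        match_scalars <;> ring
      have hface := hF.2.2 y hyB _ hy2B (1/2) (by norm_num) (by norm_num)
        (by rw [hmid]; exact hyc)
      have hdZF := recCone_of_ray hF hFcl hface.1 hdZ (by positivity : (0:ℝ) < 2 * c)
        hface.2
      exact ⟨Or.inl ⟨s, hs, y, hface.1, rfl⟩, Or.inr ⟨dZ, hdZF, rfl⟩⟩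
    · exfalso
      have := congrFun heq (Fin.last q)
      simp only [Pi.add_apply, Pi.smul_apply, lift1_last, lift0_last, smul_eq_mul] at this
      nlinarith
  · -- Y recession, Z positive
    rcases hP with ⟨τ, hτ, x, hxF, heq⟩ | ⟨d, _, heq⟩
    · have h1 : (1 - l) * t = τ := by
        have := congrFun heq (Fin.last q)
        simpa [lift1_last, lift0_last] using this
      set c := l / ((1 - l) * t) with hc
      have hlt : (0:ℝ) < (1 - l) * t := by nlinarith
      have hc0 : 0 < c := div_pos hl0 hlt
      have hxe : z + c • dY = x := by
        funext i
        have := congrFun heq i.castSucc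
        simp only [Pi.add_apply, Pi.smul_apply, lift1_castSucc, lift0_castSucc,
          smul_eq_mul, ← h1] at this
        have hls : (1 - l) * t ≠ 0 := ne_of_gt hlt
        simp only [Pi.add_apply, Pi.smul_apply, smul_eq_mul, hc]
        field_simp [sub_ne_zero.2 (ne_of_gt hl1)]
        linarith [this]
      have hyc : z + c • dY ∈ F := hxe ▸ hxF
      have hy2B : z + (2 * c) • dY ∈ B := hdY z hzB (2 * c) (by positivity)
      have hmid : (1/2 : ℝ) • z + (1 - 1/2 : ℝ) • (z + (2 * c) • dY) = z + c • dY := by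
        match_scalars <;> ring
      have hface := hF.2.2 z hzB _ hy2B (1/2) (by norm_num) (by norm_num)
        (by rw [hmid]; exact hyc)
      have hdYF := recCone_of_ray hF hFcl hface.1 hdY (by positivity : (0:ℝ) < 2 * c)
        hface.2
      exact ⟨Or.inr ⟨dY, hdYF, rfl⟩, Or.inl ⟨t, ht, z, hface.1, rfl⟩⟩
    · exfalso
      have := congrFun heq (Fin.last q)
      simp only [Pi.add_apply, Pi.smul_apply, lift1_last, lift0_last, smul_eq_mul] at this
      nlinarith
  · -- both recession
    rcases hP with ⟨τ, hτ, x, hxF, heq⟩ | ⟨d, hd, heq⟩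
    · exfalso
      have := congrFun heq (Fin.last q)
      simp only [Pi.add_apply, Pi.smul_apply, lift1_last, lift0_last, smul_eq_mul] at this
      nlinarith
    · have hde : l • dY + (1 - l) • dZ = d := by
        funext i
        have := congrFun heq i.castSucc
        simpa [lift0_castSucc] using this
      have hrec := recCone_face hF hdY hdZ hl0 hl1 (hde ▸ hd)
      exact ⟨Or.inr ⟨dY, hrec.1, rfl⟩, Or.inr ⟨dZ, hrec.2, rfl⟩⟩
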